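/- Let ℓ ≥ 4, let ω ∈ ℂ be a primitive (2ℓ−2)-th root of unity, let ζ ∈ ℂ be nonzero, and let μ ∈ ℂ be nonzero. Let Λ(z) be the 2ℓ×2ℓ matrix ∑_{i=1}^{ℓ−1} (e_{i+1,i} + e_{2ℓ+1−i,2ℓ−i}) + (1/2)·(e_{ℓ+1,ℓ−1} + e_{ℓ+2,ℓ}) + (z/2)·(e_{1,2ℓ−1} + e_{2,2ℓ}), where e_{a,b} denotes the elementary matrix. For η ∈ ℂ nonzero set β_η := (1/2, η^{−1}, …, η^{−(ℓ−1)}, (1/2)·η^{−(ℓ−1)}, η^{−ℓ}, …, η^{−(2ℓ−2)})ᵀ (entries 2 through ℓ are η^{−1}, …, η^{−(ℓ−1)}; entry ℓ+1 is (1/2)η^{−(ℓ−1)}; entries ℓ+2 through 2ℓ are η^{−ℓ}, …, η^{−(2ℓ−2)}). Set β₀ := (ℓ−1)·(1/2, 0, …, 0, −μ^{−1}ζ^{−(ℓ−1)}, (2μ)^{−1}ζ^{−(ℓ−1)}, 0, …, 0, −ζ^{−(2ℓ−2)})ᵀ, whose only nonzero entries are at positions 1, ℓ, ℓ+1 and 2ℓ,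 and β₀′ the same vector with the entries at positions ℓ and ℓ+1 replaced by +μ^{−1}ζ^{−(ℓ−1)} and −(2μ)^{−1}ζ^{−(ℓ−1)}. Let P(ζ) := (1/(2ℓ−2))·(β_{ω⁰ζ}, β_{ωζ}, …, β_{ω^{2ℓ−3}ζ}, β₀, β₀′). Then P(ζ) is invertible and Λ(ζ^{2ℓ−2}) · P(ζ) = ζ · P(ζ) · D, where D = diag(1, ω, ω², …, ω^{2ℓ−3}, 0, 0). -/

import Mathlib

private lemma finSumEq {n : ℕ} (m : ℕ) (hm : m < n) (f : Fin n → ℂ)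
    (h : ∀ b : Fin n, (b : ℕ) ≠ m → f b = 0) :
    ∑ b : Fin n, f b = f ⟨m, hm⟩ := by
  apply Finset.sum_eq_single_of_mem _ (Finset.mem_univ _)
  intro b _ hb
  exact h b (by simpa [Fin.ext_iff] using hb)

private lemma foursum {l : ℕ} (hl : 4 ≤ l) (F : Fin (2*l) → ℂ)
    (hF : ∀ i : Fin (2*l), (i:ℕ) ≠ 0 → (i:ℕ) ≠ l-1 → (i:ℕ) ≠ l → (i:ℕ) ≠ 2*l-1 → F i = 0) :
    ∑ i : Fin (2*l), F i =
      F ⟨0, by omega⟩ + F ⟨l-1, by omega⟩ + F ⟨l, by omega⟩ + F ⟨2*l-1, by omega⟩ := by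
  classical
  have hsub : ({⟨0, by omega⟩, ⟨l-1, by omega⟩, ⟨l, by omega⟩, ⟨2*l-1, by omega⟩} :
      Finset (Fin (2*l))) ⊆ Finset.univ := Finset.subset_univ _
  rw [← Finset.sum_subset hsub]
  · rw [Finset.sum_insert (by simp [Fin.ext_iff]; omega),
      Finset.sum_insert (by simp [Fin.ext_iff]; omega),
      Finset.sum_insert (by simp [Fin.ext_iff]; omega),
      Finset.sum_singleton]
    ring
  · intro x _ hx
    simp only [Finset.mem_insert, Finset.mem_singleton, Fin.ext_iff, Fin.val_mk] at hx
    push_neg at hx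
    exact hF x hx.1 hx.2.1 hx.2.2.1 hx.2.2.2

private lemma geomeval (l : ℕ) (hl : 4 ≤ l) (x : ℂ) (hx2 : x^(2*l-2) = 1) :
    (1/2 : ℂ) + (∑ m ∈ Finset.Ico 1 (l-1), x^m) + (1/2)*x^(l-1)
      + (1/2)*x^(l-1) + (∑ e ∈ Finset.Ico l (2*l-2), x^e)
      + (1/2)*x^(2*l-2) = if x = 1 then (2*(l:ℂ)-2) else 0 := by
  have hsplit : ∑ e ∈ Finset.range (2*l-2), x^e
      = 1 + (∑ m ∈ Finset.Ico 1 (l-1), x^m) + x^(l-1) + (∑ e ∈ Finset.Ico l (2*l-2), x^e) := by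
    rw [Finset.range_eq_Ico,
      ← Finset.sum_Ico_consecutive (x ^ ·) (by omega : (0:ℕ) ≤ 1) (by omega : 1 ≤ 2*l-2),
      ← Finset.sum_Ico_consecutive (x ^ ·) (by omega : (1:ℕ) ≤ l-1) (by omega : l-1 ≤ 2*l-2),
      ← Finset.sum_Ico_consecutive (x ^ ·) (by omega : l-1 ≤ l) (by omega : l ≤ 2*l-2)]
    rw [show Finset.Ico 0 1 = {0} from rfl,
      show Finset.Ico (l-1) l = {l-1} by
        ext m; simp only [Finset.mem_Ico, Finset.mem_singleton]; omega]
    simp only [Finset.sum_singleton, pow_zero]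
    ring
  have key : (1/2 : ℂ) + (∑ m ∈ Finset.Ico 1 (l-1), x^m) + (1/2)*x^(l-1)
      + (1/2)*x^(l-1) + (∑ e ∈ Finset.Ico l (2*l-2), x^e)
      + (1/2)*x^(2*l-2) = ∑ e ∈ Finset.range (2*l-2), x^e := by
    rw [hsplit, hx2]; ring
  rw [key]
  by_cases hx : x = 1
  · rw [if_pos hx, hx]
    simp only [one_pow, Finset.sum_const, Finset.card_range, nsmul_eq_mul, mul_one]
    push_cast [Nat.cast_sub (by omega : 2 ≤ 2*l)]
    ring
  · rw [if_neg hx, geom_sum_eq hx, hx2, sub_self, zero_div]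

open Finset in
private lemma geomdot (l : ℕ) (hl : 4 ≤ l) (γ δ : ℂ) (hδ : δ ≠ 0) :
    ∑ m ∈ Finset.range (2*l),
      ((if m = 0 then 1
       else if m ≤ l - 2 then γ^m
       else if m + 1 = l then (1/2) * γ^(l-1)
       else if m = l then γ^(l-1)
       else if m + 1 = 2*l then (1/2) * γ^(2*l-2)
       else γ^(m-1)) *
      (if m = 0 then 1/2
       else if m ≤ l - 1 then δ ^ (-(m:ℤ))
       else if m = l then (1/2) * δ ^ (-((l:ℤ)-1))
       else δ ^ (-((m:ℤ)-1))))
    = (1/2 : ℂ) + (∑ m ∈ Finset.Ico 1 (l-1), (γ*δ⁻¹)^m) + (1/2)*(γ*δ⁻¹)^(l-1)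
      + (1/2)*(γ*δ⁻¹)^(l-1) + (∑ e ∈ Finset.Ico l (2*l-2), (γ*δ⁻¹)^e)
      + (1/2)*(γ*δ⁻¹)^(2*l-2) := by
  set x : ℂ := γ * δ⁻¹ with hx
  have key : ∀ p : ℕ, γ^p * δ^(-(p:ℤ)) = x^p := fun p => by
    rw [hx, mul_pow, inv_pow, ← zpow_natCast δ, ← zpow_neg]
  set g : ℕ → ℂ := fun m =>
      ((if m = 0 then 1
       else if m ≤ l - 2 then γ^m
       else if m + 1 = l then (1/2) * γ^(l-1)
       else if m = l then γ^(l-1)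
       else if m + 1 = 2*l then (1/2) * γ^(2*l-2)
       else γ^(m-1)) *
      (if m = 0 then 1/2
       else if m ≤ l - 1 then δ ^ (-(m:ℤ))
       else if m = l then (1/2) * δ ^ (-((l:ℤ)-1))
       else δ ^ (-((m:ℤ)-1)))) with hg
  rw [Finset.range_eq_Ico,
    ← Finset.sum_Ico_consecutive g (by omega : (0:ℕ) ≤ 1) (by omega : 1 ≤ 2*l),
    ← Finset.sum_Ico_consecutive g (by omega : (1:ℕ) ≤ l-1) (by omega : l-1 ≤ 2*l),
    ← Finset.sum_Ico_consecutive g (by omega : l-1 ≤ l) (by omega : l ≤ 2*l),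
    ← Finset.sum_Ico_consecutive g (by omega : l ≤ l+1) (by omega : l+1 ≤ 2*l),
    ← Finset.sum_Ico_consecutive g (by omega : l+1 ≤ 2*l-1) (by omega : 2*l-1 ≤ 2*l)]
  have p1 : ∑ m ∈ Finset.Ico 0 1, g m = 1/2 := by
    rw [show Finset.Ico 0 1 = {0} from rfl, Finset.sum_singleton, hg]
    norm_num
  have p2 : ∑ m ∈ Finset.Ico 1 (l-1), g m = ∑ m ∈ Finset.Ico 1 (l-1), x^m := by
    refine Finset.sum_congr rfl fun m hm => ?_
    simp only [Finset.mem_Ico] at hm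
    rw [hg]
    beta_reduce
    rw [if_neg (by omega), if_pos (by omega), if_neg (by omega), if_pos (by omega)]
    exact key m
  have p3 : ∑ m ∈ Finset.Ico (l-1) l, g m = (1/2) * x^(l-1) := by
    rw [show Finset.Ico (l-1) l = {l-1} by
        ext m; simp only [Finset.mem_Ico, Finset.mem_singleton]; omega, Finset.sum_singleton, hg]
    beta_reduce
    rw [if_neg (by omega), if_neg (by omega), if_pos (by omega), if_neg (by omega),
      if_pos (by omega), mul_assoc, key (l-1)]
  have p4 : ∑ m ∈ Finset.Ico l (l+1), g m = (1/2) * x^(l-1) := by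
    rw [Nat.Ico_succ_singleton, Finset.sum_singleton, hg]
    beta_reduce
    rw [if_neg (by omega), if_neg (by omega), if_neg (by omega), if_pos (by trivial),
      if_neg (by omega), if_neg (by omega), if_pos (by trivial)]
    have : δ ^ (-((l:ℤ)-1)) = δ ^ (-((l-1 : ℕ):ℤ)) := by
      congr 1; push_cast [Nat.cast_sub (by omega : 1 ≤ l)]; ring
    rw [this, mul_comm (γ^(l-1)), mul_assoc, mul_comm (δ ^ _), key (l-1)]
  have p5 : ∑ m ∈ Finset.Ico (l+1) (2*l-1), g m = ∑ e ∈ Finset.Ico l (2*l-2), x^e := by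
    have step : ∀ m ∈ Finset.Ico (l+1) (2*l-1), g m = x^(m-1) := by
      intro m hm
      simp only [Finset.mem_Ico] at hm
      rw [hg]
      beta_reduce
      rw [if_neg (by omega), if_neg (by omega), if_neg (by omega), if_neg (by omega),
        if_neg (by omega), if_neg (by omega), if_neg (by omega), if_neg (by omega)]
      have : δ ^ (-((m:ℤ)-1)) = δ ^ (-((m-1 : ℕ):ℤ)) := by
        congr 1; push_cast [Nat.cast_sub (by omega : 1 ≤ m)]; ring
      rw [this, key (m-1)]
    rw [Finset.sum_congr rfl step, Finset.sum_Ico_eq_sum_range, Finset.sum_Ico_eq_sum_range]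
    refine Finset.sum_congr (by congr 1 <;> omega) fun i _ => ?_
    congr 1
    omega
  have p6 : ∑ m ∈ Finset.Ico (2*l-1) (2*l), g m = (1/2) * x^(2*l-2) := by
    rw [show Finset.Ico (2*l-1) (2*l) = {2*l-1} by
        ext m; simp only [Finset.mem_Ico, Finset.mem_singleton]; omega,
      Finset.sum_singleton, hg]
    beta_reduce
    rw [if_neg (by omega), if_neg (by omega), if_neg (by omega), if_neg (by omega),
      if_pos (by omega), if_neg (by omega), if_neg (by omega), if_neg (by omega)]
    have h2 : δ ^ (-(((2*l-1:ℕ):ℤ) - 1)) = δ ^ (-((2*l-2:ℕ):ℤ)) := by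
      congr 1
      push_cast [Nat.cast_sub (by omega : 1 ≤ 2*l), Nat.cast_sub (by omega : 2 ≤ 2*l)]
      ring
    rw [h2, mul_assoc, key (2*l-2)]
  rw [p1, p2, p3, p4, p5, p6]
  ring


/-- The `2ℓ×2ℓ` matrix
`Λ(z) = ∑_{i=1}^{ℓ−1}(e_{i+1,i} + e_{2ℓ+1−i,2ℓ−i}) + (1/2)(e_{ℓ+1,ℓ−1} + e_{ℓ+2,ℓ})
+ (z/2)(e_{1,2ℓ−1} + e_{2,2ℓ})` (one-indexed elementary matrices `e_{a,b}`). -/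
noncomputable def LamMatD (l : ℕ) (z : ℂ) : Matrix (Fin (2*l)) (Fin (2*l)) ℂ :=
  Matrix.of fun a b =>
    (if ((1 ≤ (a : ℕ) ∧ (a : ℕ) ≤ l - 1) ∨ (l + 1 ≤ (a : ℕ) ∧ (a : ℕ) ≤ 2*l - 1))
        ∧ (b : ℕ) + 1 = (a : ℕ) then 1 else 0) +
    (if (a : ℕ) = l ∧ (b : ℕ) + 2 = l then 1 / 2 else 0) +
    (if (a : ℕ) = l + 1 ∧ (b : ℕ) + 1 = l then 1 / 2 else 0) +
    (if (a : ℕ) = 0 ∧ (b : ℕ) = 2*l - 2 then z / 2 else 0) +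
    (if (a : ℕ) = 1 ∧ (b : ℕ) = 2*l - 1 then z / 2 else 0)

/-- The column vector `β_η = (1/2, η^{−1}, …, η^{−(ℓ−1)}, (1/2)η^{−(ℓ−1)}, η^{−ℓ}, …,
η^{−(2ℓ−2)})ᵀ` (zero-indexed rows `0, 1, …, ℓ−1, ℓ, ℓ+1, …, 2ℓ−1`). -/
noncomputable def betaD (l : ℕ) (η : ℂ) : Fin (2*l) → ℂ := fun i =>
  if (i : ℕ) = 0 then 1 / 2
  else if (i : ℕ) ≤ l - 1 then η ^ (-((i : ℕ) : ℤ))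
  else if (i : ℕ) = l then (1 / 2) * η ^ (-((l : ℤ) - 1))
  else η ^ (-(((i : ℕ) : ℤ) - 1))

/-- The column vector `β₀ = (ℓ−1)·(1/2, 0, …, 0, −μ⁻¹ζ^{−(ℓ−1)}, (2μ)⁻¹ζ^{−(ℓ−1)}, 0,
…, 0, −ζ^{−(2ℓ−2)})ᵀ`, with nonzero entries at one-indexed positions `1, ℓ, ℓ+1, 2ℓ`. -/
noncomputable def betaD0 (l : ℕ) (μ ζ : ℂ) : Fin (2*l) → ℂ := fun i =>
  ((l : ℂ) - 1) *
    (if (i : ℕ) = 0 then 1 / 2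
     else if (i : ℕ) + 1 = l then -μ⁻¹ * ζ ^ (-((l : ℤ) - 1))
     else if (i : ℕ) = l then (2 * μ)⁻¹ * ζ ^ (-((l : ℤ) - 1))
     else if (i : ℕ) + 1 = 2*l then -(ζ ^ (-(2 * (l : ℤ) - 2)))
     else 0)

/-- The column vector `β₀′`, equal to `β₀` except that the entries at one-indexed
positions `ℓ` and `ℓ+1` are replaced by `+μ⁻¹ζ^{−(ℓ−1)}` and `−(2μ)⁻¹ζ^{−(ℓ−1)}`. -/
noncomputable def betaD0' (l : ℕ) (μ ζ : ℂ) : Fin (2*l) → ℂ := fun i =>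
  ((l : ℂ) - 1) *
    (if (i : ℕ) = 0 then 1 / 2
     else if (i : ℕ) + 1 = l then μ⁻¹ * ζ ^ (-((l : ℤ) - 1))
     else if (i : ℕ) = l then -((2 * μ)⁻¹ * ζ ^ (-((l : ℤ) - 1)))
     else if (i : ℕ) + 1 = 2*l then -(ζ ^ (-(2 * (l : ℤ) - 2)))
     else 0)

/-- The matrix `P(ζ) = (1/(2ℓ−2))·(β_{ω⁰ζ}, β_{ωζ}, …, β_{ω^{2ℓ−3}ζ}, β₀, β₀′)`. -/
noncomputable def PmatD (l : ℕ) (ω μ ζ : ℂ) : Matrix (Fin (2*l)) (Fin (2*l)) ℂ :=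
  Matrix.of fun i k =>
    (1 / (2 * (l : ℂ) - 2)) *
      (if (k : ℕ) < 2*l - 2 then betaD l (ω ^ (k : ℕ) * ζ) i
       else if (k : ℕ) = 2*l - 2 then betaD0 l μ ζ i
       else betaD0' l μ ζ i)


private lemma lam_mulVec (l : ℕ) (hl : 4 ≤ l) (z : ℂ) (v : Fin (2*l) → ℂ) (a : Fin (2*l)) :
    (LamMatD l z).mulVec v a =
      (if (1 ≤ (a:ℕ) ∧ (a:ℕ) ≤ l - 1) ∨ (l + 1 ≤ (a:ℕ) ∧ (a:ℕ) ≤ 2*l - 1)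
        then v ⟨(a:ℕ) - 1, by omega⟩ else 0) +
      (if (a:ℕ) = l then (1/2) * v ⟨l - 2, by omega⟩ else 0) +
      (if (a:ℕ) = l + 1 then (1/2) * v ⟨l - 1, by omega⟩ else 0) +
      (if (a:ℕ) = 0 then (z/2) * v ⟨2*l - 2, by omega⟩ else 0) +
      (if (a:ℕ) = 1 then (z/2) * v ⟨2*l - 1, by omega⟩ else 0) := by
  have ha := a.isLt
  simp only [Matrix.mulVec, dotProduct, LamMatD, Matrix.of_apply]
  simp only [add_mul, Finset.sum_add_distrib]
  congr 1; congr 1; congr 1; congr 1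
  · by_cases h : (1 ≤ (a:ℕ) ∧ (a:ℕ) ≤ l - 1) ∨ (l + 1 ≤ (a:ℕ) ∧ (a:ℕ) ≤ 2*l - 1)
    · rw [if_pos h, finSumEq ((a:ℕ) - 1) (by omega)
        (fun b => (if _ ∧ (b : ℕ) + 1 = (a:ℕ) then (1:ℂ) else 0) * v b)]
      · rw [if_pos ⟨h, by simp only [Fin.val_mk]; try omega⟩, one_mul]
      · intro b hb
        rw [if_neg (by omega), zero_mul]
    · rw [if_neg h]
      apply Finset.sum_eq_zero
      intro b _
      rw [if_neg (by tauto), zero_mul]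
  · by_cases h : (a:ℕ) = l
    · rw [if_pos h, finSumEq (l - 2) (by omega)
        (fun b => (if (a:ℕ) = l ∧ (b : ℕ) + 2 = l then (1:ℂ)/2 else 0) * v b)]
      · rw [if_pos ⟨h, by simp only [Fin.val_mk]; try omega⟩]
      · intro b hb; rw [if_neg (by omega), zero_mul]
    · rw [if_neg h]
      apply Finset.sum_eq_zero
      intro b _; rw [if_neg (by tauto), zero_mul]
  · by_cases h : (a:ℕ) = l + 1
    · rw [if_pos h, finSumEq (l - 1) (by omega)
        (fun b => (if (a:ℕ) = l + 1 ∧ (b : ℕ) + 1 = l then (1:ℂ)/2 else 0) * v b)]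
      · rw [if_pos ⟨h, by simp only [Fin.val_mk]; try omega⟩]
      · intro b hb; rw [if_neg (by omega), zero_mul]
    · rw [if_neg h]
      apply Finset.sum_eq_zero
      intro b _; rw [if_neg (by tauto), zero_mul]
  · by_cases h : (a:ℕ) = 0
    · rw [if_pos h, finSumEq (2*l - 2) (by omega)
        (fun b => (if (a:ℕ) = 0 ∧ (b : ℕ) = 2*l - 2 then z/2 else 0) * v b)]
      · rw [if_pos ⟨h, by simp only [Fin.val_mk]; try omega⟩]
      · intro b hb; rw [if_neg (by omega), zero_mul]
    · rw [if_neg h]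
      apply Finset.sum_eq_zero
      intro b _; rw [if_neg (by tauto), zero_mul]
  · by_cases h : (a:ℕ) = 1
    · rw [if_pos h, finSumEq (2*l - 1) (by omega)
        (fun b => (if (a:ℕ) = 1 ∧ (b : ℕ) = 2*l - 1 then z/2 else 0) * v b)]
      · rw [if_pos ⟨h, by simp only [Fin.val_mk]; try omega⟩]
      · intro b hb; rw [if_neg (by omega), zero_mul]
    · rw [if_neg h]
      apply Finset.sum_eq_zero
      intro b _; rw [if_neg (by tauto), zero_mul]

private lemma eigA (l : ℕ) (hl : 4 ≤ l) (η ζ : ℂ) (hη : η ≠ 0)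
    (hpow : η ^ (2*l - 2) = ζ ^ (2*l - 2)) :
    (LamMatD l (ζ ^ (2*l - 2))).mulVec (betaD l η) = η • betaD l η := by
  funext a
  rw [lam_mulVec l hl, Pi.smul_apply, smul_eq_mul]
  have ha := a.isLt
  have hzn : η ^ (2*l-2) = η ^ (2*(l:ℤ) - 2) := by
    rw [← zpow_natCast]
    congr 1
    push_cast [Nat.cast_sub (by omega : 2 ≤ 2*l)]; ring
  have hmul : ∀ p : ℤ, η * η ^ p = η ^ (p + 1) := fun p => by
    rw [zpow_add₀ hη, zpow_one, mul_comm]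
  by_cases h0 : (a:ℕ) = 0
  · rw [if_neg (by omega), if_neg (by omega), if_neg (by omega), if_pos h0, if_neg (by omega)]
    have e1 : betaD l η ⟨2*l-2, by omega⟩ = η ^ (-((2*(l:ℤ)-2) - 1)) := by
      simp only [betaD, Fin.val_mk]
      rw [if_neg (by omega), if_neg (by omega), if_neg (by omega)]
      congr 1; push_cast [Nat.cast_sub (by omega : 2 ≤ 2*l)]; ring
    have e2 : betaD l η a = 1/2 := by simp only [betaD, h0]; norm_num
    rw [e1, e2, ← hpow, hzn]
    simp only [add_zero, zero_add]
    rw [div_mul_eq_mul_div, ← zpow_add₀ hη,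
      show (2*(l:ℤ) - 2) + -((2*(l:ℤ)-2) - 1) = 1 by ring, zpow_one]
    ring
  · by_cases h1 : (a:ℕ) = 1
    · rw [if_pos (by omega), if_neg (by omega), if_neg (by omega), if_neg (by omega), if_pos h1]
      have e1 : betaD l η ⟨(a:ℕ)-1, by omega⟩ = 1/2 := by
        simp only [betaD, Fin.val_mk]; rw [if_pos (by omega)]
      have e2 : betaD l η ⟨2*l-1, by omega⟩ = η ^ (-(2*(l:ℤ)-2)) := by
        simp only [betaD, Fin.val_mk]
        rw [if_neg (by omega), if_neg (by omega), if_neg (by omega)]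
        congr 1; push_cast [Nat.cast_sub (by omega : 1 ≤ 2*l)]; ring
      have e3 : betaD l η a = η ^ (-1 : ℤ) := by
        simp only [betaD, h1]
        rw [if_neg (by omega), if_pos (by omega)]; norm_num
      rw [e1, e2, e3, ← hpow, hzn]
      simp only [add_zero, zero_add]
      rw [div_mul_eq_mul_div, ← zpow_add₀ hη,
        show (2*(l:ℤ) - 2) + -(2*(l:ℤ)-2) = 0 by ring, zpow_zero, hmul]
      norm_num
    · by_cases h2 : (a:ℕ) ≤ l - 1
      · rw [if_pos (by omega), if_neg (by omega), if_neg (by omega), if_neg h0, if_neg h1]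
        have e1 : betaD l η ⟨(a:ℕ)-1, by omega⟩ = η ^ (-(((a:ℕ):ℤ) - 1)) := by
          simp only [betaD, Fin.val_mk]
          rw [if_neg (by omega), if_pos (by omega)]
          congr 1; push_cast [Nat.cast_sub (by omega : 1 ≤ (a:ℕ))]; ring
        have e2 : betaD l η a = η ^ (-((a:ℕ):ℤ)) := by
          simp only [betaD]; rw [if_neg h0, if_pos h2]
        rw [e1, e2, hmul, show -(((a:ℕ):ℤ)) + 1 = -((((a:ℕ):ℤ)) - 1) by ring]
        simp only [add_zero, zero_add]
      · by_cases h3 : (a:ℕ) = l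
        · rw [if_neg (by omega), if_pos h3, if_neg (by omega), if_neg h0, if_neg h1]
          have e1 : betaD l η ⟨l-2, by omega⟩ = η ^ (-((l:ℤ) - 2)) := by
            simp only [betaD, Fin.val_mk]
            rw [if_neg (by omega), if_pos (by omega)]
            congr 1; push_cast [Nat.cast_sub (by omega : 2 ≤ l)]; ring
          have e2 : betaD l η a = (1/2) * η ^ (-((l:ℤ)-1)) := by
            simp only [betaD]; rw [if_neg h0, if_neg (by omega), if_pos h3]
          rw [e1, e2,
            show η * ((1:ℂ)/2 * η^(-((l:ℤ)-1))) = (1/2)*(η * η^(-((l:ℤ)-1))) by ring,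
            hmul, show -((l:ℤ)-1) + 1 = -((l:ℤ)-2) by ring]
          simp only [add_zero, zero_add]
        · by_cases h4 : (a:ℕ) = l + 1
          · rw [if_pos (by omega), if_neg (by omega), if_pos h4, if_neg h0, if_neg h1]
            have e1 : betaD l η ⟨(a:ℕ)-1, by omega⟩ = (1/2) * η ^ (-((l:ℤ)-1)) := by
              simp only [betaD, Fin.val_mk]
              rw [if_neg (by omega), if_neg (by omega), if_pos (by omega)]
            have e2 : betaD l η ⟨l-1, by omega⟩ = η ^ (-((l:ℤ)-1)) := by
              simp only [betaD, Fin.val_mk]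
              rw [if_neg (by omega), if_pos (by omega)]
              congr 1; push_cast [Nat.cast_sub (by omega : 1 ≤ l)]; ring
            have e3 : betaD l η a = η ^ (-(l:ℤ)) := by
              simp only [betaD, h4]
              rw [if_neg (by omega), if_neg (by omega), if_neg (by omega)]
              congr 1; push_cast; ring
            rw [e1, e2, e3, hmul, show -(l:ℤ) + 1 = -((l:ℤ)-1) by ring]
            simp only [add_zero, zero_add]
            ring
          · rw [if_pos (by omega), if_neg h3, if_neg h4, if_neg h0, if_neg h1]
            have e1 : betaD l η ⟨(a:ℕ)-1, by omega⟩ = η ^ (-(((a:ℕ):ℤ) - 2)) := by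
              simp only [betaD, Fin.val_mk]
              rw [if_neg (by omega), if_neg (by omega), if_neg (by omega)]
              congr 1; push_cast [Nat.cast_sub (by omega : 1 ≤ (a:ℕ))]; ring
            have e2 : betaD l η a = η ^ (-(((a:ℕ):ℤ) - 1)) := by
              simp only [betaD]
              rw [if_neg h0, if_neg (by omega), if_neg (by omega)]
            rw [e1, e2, hmul, show -(((a:ℕ):ℤ)-1) + 1 = -((((a:ℕ):ℤ))-2) by ring]
            simp only [add_zero, zero_add]

private lemma eigB (l : ℕ) (hl : 4 ≤ l) (ζ μ : ℂ) (hζ : ζ ≠ 0) :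
    (LamMatD l (ζ ^ (2*l - 2))).mulVec (betaD0 l μ ζ) = 0 := by
  funext a
  rw [lam_mulVec l hl, Pi.zero_apply]
  have ha := a.isLt
  have hzn : ζ ^ (2*l-2) = ζ ^ (2*(l:ℤ) - 2) := by
    rw [← zpow_natCast]
    congr 1
    push_cast [Nat.cast_sub (by omega : 2 ≤ 2*l)]; ring
  by_cases h0 : (a:ℕ) = 0
  · rw [if_neg (by omega), if_neg (by omega), if_neg (by omega), if_pos h0, if_neg (by omega)]
    have e1 : betaD0 l μ ζ ⟨2*l-2, by omega⟩ = 0 := by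
      simp only [betaD0, Fin.val_mk]
      rw [if_neg (by omega), if_neg (by omega), if_neg (by omega), if_neg (by omega)]
      ring
    rw [e1]; ring
  · by_cases h1 : (a:ℕ) = 1
    · rw [if_pos (by omega), if_neg (by omega), if_neg (by omega), if_neg (by omega), if_pos h1]
      have e1 : betaD0 l μ ζ ⟨(a:ℕ)-1, by omega⟩ = ((l:ℂ)-1) * (1/2) := by
        simp only [betaD0, Fin.val_mk]; rw [if_pos (by omega)]
      have e2 : betaD0 l μ ζ ⟨2*l-1, by omega⟩ = ((l:ℂ)-1) * (-(ζ ^ (-(2*(l:ℤ)-2)))) := by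
        simp only [betaD0, Fin.val_mk]
        rw [if_neg (by omega), if_neg (by omega), if_neg (by omega), if_pos (by omega)]
      rw [e1, e2, hzn]
      simp only [add_zero, zero_add]
      have hone : ζ ^ (2*(l:ℤ)-2) * ζ ^ (-(2*(l:ℤ)-2)) = 1 := by
        rw [← zpow_add₀ hζ]; norm_num
      linear_combination (-(((l:ℂ)-1)/2)) * hone
    · by_cases h2 : (a:ℕ) ≤ l - 1
      · rw [if_pos (by omega), if_neg (by omega), if_neg (by omega), if_neg h0, if_neg h1]
        have e1 : betaD0 l μ ζ ⟨(a:ℕ)-1, by omega⟩ = 0 := by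
          simp only [betaD0, Fin.val_mk]
          rw [if_neg (by omega), if_neg (by omega), if_neg (by omega), if_neg (by omega)]
          ring
        rw [e1]; ring
      · by_cases h3 : (a:ℕ) = l
        · rw [if_neg (by omega), if_pos h3, if_neg (by omega), if_neg h0, if_neg h1]
          have e1 : betaD0 l μ ζ ⟨l-2, by omega⟩ = 0 := by
            simp only [betaD0, Fin.val_mk]
            rw [if_neg (by omega), if_neg (by omega), if_neg (by omega), if_neg (by omega)]
            ring
          rw [e1]; ring
        · by_cases h4 : (a:ℕ) = l + 1
          · rw [if_pos (by omega), if_neg (by omega), if_pos h4, if_neg h0, if_neg h1]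
            have e1 : betaD0 l μ ζ ⟨(a:ℕ)-1, by omega⟩
                = ((l:ℂ)-1) * ((2*μ)⁻¹ * ζ ^ (-((l:ℤ)-1))) := by
              simp only [betaD0, Fin.val_mk]
              rw [if_neg (by omega), if_neg (by omega), if_pos (by omega)]
            have e2 : betaD0 l μ ζ ⟨l-1, by omega⟩
                = ((l:ℂ)-1) * (-μ⁻¹ * ζ ^ (-((l:ℤ)-1))) := by
              simp only [betaD0, Fin.val_mk]
              rw [if_neg (by omega), if_pos (by omega)]
            rw [e1, e2, mul_inv]
            simp only [add_zero, zero_add]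
            ring
          · rw [if_pos (by omega), if_neg h3, if_neg h4, if_neg h0, if_neg h1]
            have e1 : betaD0 l μ ζ ⟨(a:ℕ)-1, by omega⟩ = 0 := by
              simp only [betaD0, Fin.val_mk]
              rw [if_neg (by omega), if_neg (by omega), if_neg (by omega), if_neg (by omega)]
              ring
            rw [e1]; ring

private lemma eigB' (l : ℕ) (hl : 4 ≤ l) (ζ μ : ℂ) (hζ : ζ ≠ 0) :
    (LamMatD l (ζ ^ (2*l - 2))).mulVec (betaD0' l μ ζ) = 0 := by
  funext a
  rw [lam_mulVec l hl, Pi.zero_apply]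
  have ha := a.isLt
  have hzn : ζ ^ (2*l-2) = ζ ^ (2*(l:ℤ) - 2) := by
    rw [← zpow_natCast]
    congr 1
    push_cast [Nat.cast_sub (by omega : 2 ≤ 2*l)]; ring
  by_cases h0 : (a:ℕ) = 0
  · rw [if_neg (by omega), if_neg (by omega), if_neg (by omega), if_pos h0, if_neg (by omega)]
    have e1 : betaD0' l μ ζ ⟨2*l-2, by omega⟩ = 0 := by
      simp only [betaD0', Fin.val_mk]
      rw [if_neg (by omega), if_neg (by omega), if_neg (by omega), if_neg (by omega)]
      ring
    rw [e1]; ring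
  · by_cases h1 : (a:ℕ) = 1
    · rw [if_pos (by omega), if_neg (by omega), if_neg (by omega), if_neg (by omega), if_pos h1]
      have e1 : betaD0' l μ ζ ⟨(a:ℕ)-1, by omega⟩ = ((l:ℂ)-1) * (1/2) := by
        simp only [betaD0', Fin.val_mk]; rw [if_pos (by omega)]
      have e2 : betaD0' l μ ζ ⟨2*l-1, by omega⟩ = ((l:ℂ)-1) * (-(ζ ^ (-(2*(l:ℤ)-2)))) := by
        simp only [betaD0', Fin.val_mk]
        rw [if_neg (by omega), if_neg (by omega), if_neg (by omega), if_pos (by omega)]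
      rw [e1, e2, hzn]
      simp only [add_zero, zero_add]
      have hone : ζ ^ (2*(l:ℤ)-2) * ζ ^ (-(2*(l:ℤ)-2)) = 1 := by
        rw [← zpow_add₀ hζ]; norm_num
      linear_combination (-(((l:ℂ)-1)/2)) * hone
    · by_cases h2 : (a:ℕ) ≤ l - 1
      · rw [if_pos (by omega), if_neg (by omega), if_neg (by omega), if_neg h0, if_neg h1]
        have e1 : betaD0' l μ ζ ⟨(a:ℕ)-1, by omega⟩ = 0 := by
          simp only [betaD0', Fin.val_mk]
          rw [if_neg (by omega), if_neg (by omega), if_neg (by omega), if_neg (by omega)]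
          ring
        rw [e1]; ring
      · by_cases h3 : (a:ℕ) = l
        · rw [if_neg (by omega), if_pos h3, if_neg (by omega), if_neg h0, if_neg h1]
          have e1 : betaD0' l μ ζ ⟨l-2, by omega⟩ = 0 := by
            simp only [betaD0', Fin.val_mk]
            rw [if_neg (by omega), if_neg (by omega), if_neg (by omega), if_neg (by omega)]
            ring
          rw [e1]; ring
        · by_cases h4 : (a:ℕ) = l + 1
          · rw [if_pos (by omega), if_neg (by omega), if_pos h4, if_neg h0, if_neg h1]
            have e1 : betaD0' l μ ζ ⟨(a:ℕ)-1, by omega⟩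
                = ((l:ℂ)-1) * (-((2*μ)⁻¹ * ζ ^ (-((l:ℤ)-1)))) := by
              simp only [betaD0', Fin.val_mk]
              rw [if_neg (by omega), if_neg (by omega), if_pos (by omega)]
            have e2 : betaD0' l μ ζ ⟨l-1, by omega⟩
                = ((l:ℂ)-1) * (μ⁻¹ * ζ ^ (-((l:ℤ)-1))) := by
              simp only [betaD0', Fin.val_mk]
              rw [if_neg (by omega), if_pos (by omega)]
            rw [e1, e2, mul_inv]
            simp only [add_zero, zero_add]
            ring
          · rw [if_pos (by omega), if_neg h3, if_neg h4, if_neg h0, if_neg h1]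
            have e1 : betaD0' l μ ζ ⟨(a:ℕ)-1, by omega⟩ = 0 := by
              simp only [betaD0', Fin.val_mk]
              rw [if_neg (by omega), if_neg (by omega), if_neg (by omega), if_neg (by omega)]
              ring
            rw [e1]; ring

private noncomputable def QmatD (l : ℕ) (ω μ ζ : ℂ) : Matrix (Fin (2*l)) (Fin (2*l)) ℂ :=
  Matrix.of fun j i =>
    if (j:ℕ) < 2*l-2 then
      (if (i:ℕ) = 0 then 1
       else if (i:ℕ) ≤ l - 2 then (ω^(j:ℕ)*ζ)^(i:ℕ)
       else if (i:ℕ) + 1 = l then (1/2) * (ω^(j:ℕ)*ζ)^(l-1)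
       else if (i:ℕ) = l then (ω^(j:ℕ)*ζ)^(l-1)
       else if (i:ℕ) + 1 = 2*l then (1/2) * (ω^(j:ℕ)*ζ)^(2*l-2)
       else (ω^(j:ℕ)*ζ)^((i:ℕ)-1))
    else if (j:ℕ) = 2*l-2 then
      (if (i:ℕ) = 0 then 1
       else if (i:ℕ) + 1 = l then -(μ/2) * ζ^(l-1)
       else if (i:ℕ) = l then μ * ζ^(l-1)
       else if (i:ℕ) + 1 = 2*l then -(1/2) * ζ^(2*l-2)
       else 0)
    else
      (if (i:ℕ) = 0 then 1
       else if (i:ℕ) + 1 = l then (μ/2) * ζ^(l-1)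
       else if (i:ℕ) = l then -μ * ζ^(l-1)
       else if (i:ℕ) + 1 = 2*l then -(1/2) * ζ^(2*l-2)
       else 0)

/-- for `ℓ ≥ 4`, `ω` a primitive `(2ℓ−2)`-th root of unity, `ζ ≠ 0` and
`μ ≠ 0`, the matrix `P(ζ)` is invertible and `Λ(ζ^{2ℓ−2}) · P(ζ) = ζ · P(ζ) · D` with
`D = diag(1, ω, ω², …, ω^{2ℓ−3}, 0, 0)`. -/
theorem stmt_11 (l : ℕ) (hl : 4 ≤ l) (ω ζ μ : ℂ)
    (hω : IsPrimitiveRoot ω (2*l - 2)) (hζ : ζ ≠ 0) (hμ : μ ≠ 0) :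
    IsUnit (PmatD l ω μ ζ) ∧
    LamMatD l (ζ ^ (2*l - 2)) * PmatD l ω μ ζ =
      ζ • (PmatD l ω μ ζ *
        Matrix.diagonal fun k : Fin (2*l) =>
          if (k : ℕ) < 2*l - 2 then ω ^ (k : ℕ) else 0) := by
  have hccast : (2*(l:ℂ) - 2) = ((2*l-2 : ℕ) : ℂ) := by
    push_cast [Nat.cast_sub (by omega : 2 ≤ 2*l)]; ring
  have hN0 : (2*(l:ℂ) - 2) ≠ 0 := by
    rw [hccast]; exact Nat.cast_ne_zero.mpr (by omega)
  have hω0 : ω ≠ 0 := hω.ne_zero (by omega)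
  have hωN : ω ^ (2*l-2) = 1 := hω.pow_eq_one
  have hgN : ∀ m : ℕ, (ω^m*ζ) ^ (2*l-2) = ζ ^ (2*l-2) := by
    intro m
    rw [mul_pow, ← pow_mul, mul_comm m, pow_mul, hωN, one_pow, one_mul]
  have hcl1 : ((l-1 : ℕ) : ℤ) = (l:ℤ) - 1 := by
    push_cast [Nat.cast_sub (by omega : 1 ≤ l)]; ring
  have hcl2 : ((2*l-2 : ℕ) : ℤ) = 2*(l:ℤ) - 2 := by
    push_cast [Nat.cast_sub (by omega : 2 ≤ 2*l)]; ring
  have hinvBD : ∀ δ : ℂ, δ ≠ 0 → δ ^ (2*l-2) = ζ ^ (2*l-2) →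
      ζ^(2*l-2) * δ ^ (-(2*(l:ℤ)-2)) = 1 := by
    intro δ hδ hδN
    have : δ ^ (-(2*(l:ℤ)-2)) = (ζ^(2*l-2))⁻¹ := by
      rw [← hcl2, zpow_neg, zpow_natCast, hδN]
    rw [this, mul_inv_cancel₀ (pow_ne_zero _ hζ)]
  have hAC : ζ^(l-1) * ζ ^ (-((l:ℤ)-1)) = 1 := by
    rw [← zpow_natCast ζ (l-1), hcl1, ← zpow_add₀ hζ, add_neg_cancel, zpow_zero]
  have hmu : μ * μ⁻¹ = 1 := mul_inv_cancel₀ hμ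
  -- Part 2 : the eigen identity
  have hmain : LamMatD l (ζ ^ (2*l - 2)) * PmatD l ω μ ζ =
      ζ • (PmatD l ω μ ζ *
        Matrix.diagonal fun k : Fin (2*l) =>
          if (k : ℕ) < 2*l - 2 then ω ^ (k : ℕ) else 0) := by
    ext a k
    rw [Matrix.mul_apply, Matrix.smul_apply, Matrix.mul_diagonal, smul_eq_mul]
    by_cases hk : (k:ℕ) < 2*l-2
    · have hη : ω^(k:ℕ)*ζ ≠ 0 := mul_ne_zero (pow_ne_zero _ hω0) hζ
      have hP : ∀ i : Fin (2*l), PmatD l ω μ ζ i k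
          = (1 / (2*(l:ℂ)-2)) * betaD l (ω^(k:ℕ)*ζ) i := by
        intro i; simp only [PmatD, Matrix.of_apply]; rw [if_pos hk]
      simp only [hP]
      have hsum : ∑ b, LamMatD l (ζ^(2*l-2)) a b
            * ((1/(2*(l:ℂ)-2)) * betaD l (ω^(k:ℕ)*ζ) b)
          = (1/(2*(l:ℂ)-2)) * ((LamMatD l (ζ^(2*l-2))).mulVec (betaD l (ω^(k:ℕ)*ζ)) a) := by
        rw [Matrix.mulVec, dotProduct, Finset.mul_sum]
        exact Finset.sum_congr rfl fun b _ => by ring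
      rw [hsum, eigA l hl _ ζ hη (hgN (k:ℕ)), Pi.smul_apply, smul_eq_mul, if_pos hk]
      ring
    · by_cases hk2 : (k:ℕ) = 2*l-2
      · have hP : ∀ i : Fin (2*l), PmatD l ω μ ζ i k
            = (1 / (2*(l:ℂ)-2)) * betaD0 l μ ζ i := by
          intro i; simp only [PmatD, Matrix.of_apply]; rw [if_neg hk, if_pos hk2]
        simp only [hP]
        have hsum : ∑ b, LamMatD l (ζ^(2*l-2)) a b
              * ((1/(2*(l:ℂ)-2)) * betaD0 l μ ζ b)
            = (1/(2*(l:ℂ)-2)) * ((LamMatD l (ζ^(2*l-2))).mulVec (betaD0 l μ ζ) a) := by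
          rw [Matrix.mulVec, dotProduct, Finset.mul_sum]
          exact Finset.sum_congr rfl fun b _ => by ring
        rw [hsum, eigB l hl ζ μ hζ, Pi.zero_apply, mul_zero, if_neg hk, mul_zero, mul_zero]
      · have hP : ∀ i : Fin (2*l), PmatD l ω μ ζ i k
            = (1 / (2*(l:ℂ)-2)) * betaD0' l μ ζ i := by
          intro i; simp only [PmatD, Matrix.of_apply]; rw [if_neg hk, if_neg hk2]
        simp only [hP]
        have hsum : ∑ b, LamMatD l (ζ^(2*l-2)) a b
              * ((1/(2*(l:ℂ)-2)) * betaD0' l μ ζ b)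
            = (1/(2*(l:ℂ)-2)) * ((LamMatD l (ζ^(2*l-2))).mulVec (betaD0' l μ ζ) a) := by
          rw [Matrix.mulVec, dotProduct, Finset.mul_sum]
          exact Finset.sum_congr rfl fun b _ => by ring
        rw [hsum, eigB' l hl ζ μ hζ, Pi.zero_apply, mul_zero, if_neg hk, mul_zero, mul_zero]
  -- Part 1 : invertibility via explicit left inverse
  have hQP : QmatD l ω μ ζ * PmatD l ω μ ζ = 1 := by
    ext j k
    rw [Matrix.mul_apply, Matrix.one_apply]
    have hj2l := j.isLt
    have hk2l := k.isLt
    have pull : ∀ (C : Fin (2*l) → ℂ),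
        ∑ i, QmatD l ω μ ζ j i * ((1/(2*(l:ℂ)-2)) * C i)
        = (1/(2*(l:ℂ)-2)) * ∑ i, QmatD l ω μ ζ j i * C i := by
      intro C
      rw [Finset.mul_sum]
      exact Finset.sum_congr rfl fun i _ => by ring
    by_cases hk : (k:ℕ) < 2*l-2
    · have hδ : ω^(k:ℕ)*ζ ≠ 0 := mul_ne_zero (pow_ne_zero _ hω0) hζ
      have hP : ∀ i : Fin (2*l), PmatD l ω μ ζ i k
          = (1 / (2*(l:ℂ)-2)) * betaD l (ω^(k:ℕ)*ζ) i := by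
        intro i; simp only [PmatD, Matrix.of_apply]; rw [if_pos hk]
      simp only [hP]
      rw [pull]
      by_cases hj : (j:ℕ) < 2*l-2
      · -- geometric case
        have hx2 : ((ω^(j:ℕ)*ζ) * (ω^(k:ℕ)*ζ)⁻¹)^(2*l-2) = 1 := by
          rw [mul_pow, inv_pow, hgN, hgN, mul_inv_cancel₀ (pow_ne_zero _ hζ)]
        have conv1 : ∑ i : Fin (2*l), QmatD l ω μ ζ j i * betaD l (ω^(k:ℕ)*ζ) i
            = ∑ m ∈ Finset.range (2*l),
              ((if m = 0 then (1:ℂ)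
               else if m ≤ l - 2 then (ω^(j:ℕ)*ζ)^m
               else if m + 1 = l then (1/2) * (ω^(j:ℕ)*ζ)^(l-1)
               else if m = l then (ω^(j:ℕ)*ζ)^(l-1)
               else if m + 1 = 2*l then (1/2) * (ω^(j:ℕ)*ζ)^(2*l-2)
               else (ω^(j:ℕ)*ζ)^(m-1)) *
              (if m = 0 then 1/2
               else if m ≤ l - 1 then (ω^(k:ℕ)*ζ) ^ (-(m:ℤ))
               else if m = l then (1/2) * (ω^(k:ℕ)*ζ) ^ (-((l:ℤ)-1))
               else (ω^(k:ℕ)*ζ) ^ (-((m:ℤ)-1)))) := by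
          rw [← Fin.sum_univ_eq_sum_range]
          refine Finset.sum_congr rfl fun i _ => ?_
          simp only [QmatD, betaD, Matrix.of_apply]
          rw [if_pos hj]
        rw [conv1, geomdot l hl (ω^(j:ℕ)*ζ) (ω^(k:ℕ)*ζ) hδ,
          geomeval l hl ((ω^(j:ℕ)*ζ) * (ω^(k:ℕ)*ζ)⁻¹) hx2]
        have hiff : ((ω^(j:ℕ)*ζ) * (ω^(k:ℕ)*ζ)⁻¹ = 1) ↔ j = k := by
          rw [mul_inv_eq_one₀ hδ]
          constructor
          · intro h
            exact Fin.ext (hω.pow_inj hj hk (mul_right_cancel₀ hζ h))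
          · intro h; rw [h]
        by_cases hjk : j = k
        · rw [if_pos (hiff.mpr hjk), if_pos hjk, one_div,
            inv_mul_cancel₀ hN0]
        · rw [if_neg (fun h => hjk (hiff.mp h)), if_neg hjk, mul_zero]
      · -- j is one of the two last rows, k < 2l-2 : dot product is 0
        have hjk : ¬ j = k := Fin.ne_of_val_ne (by omega)
        rw [if_neg hjk]
        have hc3 : (ω^(k:ℕ)*ζ) ^ (-(((2*l-1:ℕ):ℤ)-1)) = (ω^(k:ℕ)*ζ) ^ (-(2*(l:ℤ)-2)) := by
          congr 1
          push_cast [Nat.cast_sub (by omega : 1 ≤ 2*l)]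
          ring
        have hc1 : (ω^(k:ℕ)*ζ) ^ (-((l-1:ℕ):ℤ)) = (ω^(k:ℕ)*ζ) ^ (-((l:ℤ)-1)) := by
          congr 1; rw [hcl1]
        have hBD : ζ^(2*l-2) * (ω^(k:ℕ)*ζ) ^ (-(2*(l:ℤ)-2)) = 1 :=
          hinvBD _ hδ (hgN (k:ℕ))
        by_cases hj2 : (j:ℕ) = 2*l-2
        · have hFz : ∀ i : Fin (2*l), (i:ℕ) ≠ 0 → (i:ℕ) ≠ l-1 → (i:ℕ) ≠ l → (i:ℕ) ≠ 2*l-1 →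
              QmatD l ω μ ζ j i * betaD l (ω^(k:ℕ)*ζ) i = 0 := by
            intro i n0 n1 n2 n3
            simp only [QmatD, Matrix.of_apply]
            rw [if_neg hj, if_pos hj2, if_neg n0, if_neg (by omega), if_neg n2,
              if_neg (by omega), zero_mul]
          rw [foursum hl _ hFz]
          have t0 : QmatD l ω μ ζ j ⟨0, by omega⟩ * betaD l (ω^(k:ℕ)*ζ) ⟨0, by omega⟩
              = 1 * (1/2) := by
            simp only [QmatD, betaD, Matrix.of_apply, Fin.val_mk]
            rw [if_neg hj, if_pos hj2, if_pos (by trivial), if_pos (by trivial)]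
          have t1 : QmatD l ω μ ζ j ⟨l-1, by omega⟩ * betaD l (ω^(k:ℕ)*ζ) ⟨l-1, by omega⟩
              = (-(μ/2) * ζ^(l-1)) * (ω^(k:ℕ)*ζ) ^ (-((l:ℤ)-1)) := by
            simp only [QmatD, betaD, Matrix.of_apply, Fin.val_mk]
            rw [if_neg hj, if_pos hj2, if_neg (by omega), if_pos (by omega),
              if_neg (by omega), if_pos (by omega), hc1]
          have t2 : QmatD l ω μ ζ j ⟨l, by omega⟩ * betaD l (ω^(k:ℕ)*ζ) ⟨l, by omega⟩
              = (μ * ζ^(l-1)) * ((1/2) * (ω^(k:ℕ)*ζ) ^ (-((l:ℤ)-1))) := by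
            simp only [QmatD, betaD, Matrix.of_apply, Fin.val_mk]
            rw [if_neg hj, if_pos hj2, if_neg (by omega), if_neg (by omega), if_pos (by trivial),
              if_neg (by omega), if_neg (by omega), if_pos (by trivial)]
          have t3 : QmatD l ω μ ζ j ⟨2*l-1, by omega⟩ * betaD l (ω^(k:ℕ)*ζ) ⟨2*l-1, by omega⟩
              = (-(1/2) * ζ^(2*l-2)) * (ω^(k:ℕ)*ζ) ^ (-(2*(l:ℤ)-2)) := by
            simp only [QmatD, betaD, Matrix.of_apply, Fin.val_mk]
            rw [if_neg hj, if_pos hj2, if_neg (by omega), if_neg (by omega),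
              if_neg (by omega), if_pos (by omega), if_neg (by omega), if_neg (by omega),
              if_neg (by omega), hc3]
          rw [t0, t1, t2, t3]
          have hS : (1:ℂ) * (1/2) + (-(μ/2) * ζ^(l-1)) * (ω^(k:ℕ)*ζ) ^ (-((l:ℤ)-1))
              + (μ * ζ^(l-1)) * ((1/2) * (ω^(k:ℕ)*ζ) ^ (-((l:ℤ)-1)))
              + (-(1/2) * ζ^(2*l-2)) * (ω^(k:ℕ)*ζ) ^ (-(2*(l:ℤ)-2)) = 0 := by
            linear_combination (-(1:ℂ)/2) * hBD
          rw [hS, mul_zero]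
        · have hFz : ∀ i : Fin (2*l), (i:ℕ) ≠ 0 → (i:ℕ) ≠ l-1 → (i:ℕ) ≠ l → (i:ℕ) ≠ 2*l-1 →
              QmatD l ω μ ζ j i * betaD l (ω^(k:ℕ)*ζ) i = 0 := by
            intro i n0 n1 n2 n3
            simp only [QmatD, Matrix.of_apply]
            rw [if_neg hj, if_neg hj2, if_neg n0, if_neg (by omega), if_neg n2,
              if_neg (by omega), zero_mul]
          rw [foursum hl _ hFz]
          have t0 : QmatD l ω μ ζ j ⟨0, by omega⟩ * betaD l (ω^(k:ℕ)*ζ) ⟨0, by omega⟩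
              = 1 * (1/2) := by
            simp only [QmatD, betaD, Matrix.of_apply, Fin.val_mk]
            rw [if_neg hj, if_neg hj2, if_pos (by trivial), if_pos (by trivial)]
          have t1 : QmatD l ω μ ζ j ⟨l-1, by omega⟩ * betaD l (ω^(k:ℕ)*ζ) ⟨l-1, by omega⟩
              = ((μ/2) * ζ^(l-1)) * (ω^(k:ℕ)*ζ) ^ (-((l:ℤ)-1)) := by
            simp only [QmatD, betaD, Matrix.of_apply, Fin.val_mk]
            rw [if_neg hj, if_neg hj2, if_neg (by omega), if_pos (by omega),
              if_neg (by omega), if_pos (by omega), hc1]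
          have t2 : QmatD l ω μ ζ j ⟨l, by omega⟩ * betaD l (ω^(k:ℕ)*ζ) ⟨l, by omega⟩
              = (-μ * ζ^(l-1)) * ((1/2) * (ω^(k:ℕ)*ζ) ^ (-((l:ℤ)-1))) := by
            simp only [QmatD, betaD, Matrix.of_apply, Fin.val_mk]
            rw [if_neg hj, if_neg hj2, if_neg (by omega), if_neg (by omega), if_pos (by trivial),
              if_neg (by omega), if_neg (by omega), if_pos (by trivial)]
          have t3 : QmatD l ω μ ζ j ⟨2*l-1, by omega⟩ * betaD l (ω^(k:ℕ)*ζ) ⟨2*l-1, by omega⟩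
              = (-(1/2) * ζ^(2*l-2)) * (ω^(k:ℕ)*ζ) ^ (-(2*(l:ℤ)-2)) := by
            simp only [QmatD, betaD, Matrix.of_apply, Fin.val_mk]
            rw [if_neg hj, if_neg hj2, if_neg (by omega), if_neg (by omega),
              if_neg (by omega), if_pos (by omega), if_neg (by omega), if_neg (by omega),
              if_neg (by omega), hc3]
          rw [t0, t1, t2, t3]
          have hS : (1:ℂ) * (1/2) + ((μ/2) * ζ^(l-1)) * (ω^(k:ℕ)*ζ) ^ (-((l:ℤ)-1))
              + (-μ * ζ^(l-1)) * ((1/2) * (ω^(k:ℕ)*ζ) ^ (-((l:ℤ)-1)))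
              + (-(1/2) * ζ^(2*l-2)) * (ω^(k:ℕ)*ζ) ^ (-(2*(l:ℤ)-2)) = 0 := by
            linear_combination (-(1:ℂ)/2) * hBD
          rw [hS, mul_zero]
    · -- k is one of the two last columns
      have hBD0 : ζ^(2*l-2) * ζ ^ (-(2*(l:ℤ)-2)) = 1 := hinvBD ζ hζ rfl
      by_cases hk2 : (k:ℕ) = 2*l-2
      · have hP : ∀ i : Fin (2*l), PmatD l ω μ ζ i k
            = (1 / (2*(l:ℂ)-2)) * betaD0 l μ ζ i := by
          intro i; simp only [PmatD, Matrix.of_apply]; rw [if_neg hk, if_pos hk2]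
        simp only [hP]
        rw [pull]
        have hFz : ∀ i : Fin (2*l), (i:ℕ) ≠ 0 → (i:ℕ) ≠ l-1 → (i:ℕ) ≠ l → (i:ℕ) ≠ 2*l-1 →
            QmatD l ω μ ζ j i * betaD0 l μ ζ i = 0 := by
          intro i n0 n1 n2 n3
          simp only [betaD0]
          rw [if_neg n0, if_neg (by omega), if_neg n2, if_neg (by omega), mul_zero, mul_zero]
        rw [foursum hl _ hFz]
        have b0 : betaD0 l μ ζ ⟨0, by omega⟩ = ((l:ℂ)-1) * (1/2) := by
          simp only [betaD0, Fin.val_mk]; rw [if_pos (by trivial)]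
        have b1 : betaD0 l μ ζ ⟨l-1, by omega⟩ = ((l:ℂ)-1) * (-μ⁻¹ * ζ ^ (-((l:ℤ)-1))) := by
          simp only [betaD0, Fin.val_mk]
          rw [if_neg (by omega), if_pos (by omega)]
        have b2 : betaD0 l μ ζ ⟨l, by omega⟩ = ((l:ℂ)-1) * ((2*μ)⁻¹ * ζ ^ (-((l:ℤ)-1))) := by
          simp only [betaD0, Fin.val_mk]
          rw [if_neg (by omega), if_neg (by omega), if_pos (by trivial)]
        have b3 : betaD0 l μ ζ ⟨2*l-1, by omega⟩ = ((l:ℂ)-1) * (-(ζ ^ (-(2*(l:ℤ)-2)))) := by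
          simp only [betaD0, Fin.val_mk]
          rw [if_neg (by omega), if_neg (by omega), if_neg (by omega), if_pos (by omega)]
        by_cases hj : (j:ℕ) < 2*l-2
        · have hjk : ¬ j = k := Fin.ne_of_val_ne (by omega)
          rw [if_neg hjk]
          have hgBD : (ω^(j:ℕ)*ζ)^(2*l-2) * ζ ^ (-(2*(l:ℤ)-2)) = 1 := by
            rw [hgN]; exact hBD0
          have q0 : QmatD l ω μ ζ j ⟨0, by omega⟩ = 1 := by
            simp only [QmatD, Matrix.of_apply, Fin.val_mk]
            rw [if_pos hj, if_pos (by trivial)]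
          have q1 : QmatD l ω μ ζ j ⟨l-1, by omega⟩ = (1/2) * (ω^(j:ℕ)*ζ)^(l-1) := by
            simp only [QmatD, Matrix.of_apply, Fin.val_mk]
            rw [if_pos hj, if_neg (by omega), if_neg (by omega), if_pos (by omega)]
          have q2 : QmatD l ω μ ζ j ⟨l, by omega⟩ = (ω^(j:ℕ)*ζ)^(l-1) := by
            simp only [QmatD, Matrix.of_apply, Fin.val_mk]
            rw [if_pos hj, if_neg (by omega), if_neg (by omega), if_neg (by omega),
              if_pos (by trivial)]
          have q3 : QmatD l ω μ ζ j ⟨2*l-1, by omega⟩ = (1/2) * (ω^(j:ℕ)*ζ)^(2*l-2) := by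
            simp only [QmatD, Matrix.of_apply, Fin.val_mk]
            rw [if_pos hj, if_neg (by omega), if_neg (by omega), if_neg (by omega),
              if_neg (by omega), if_pos (by omega)]
          rw [q0, q1, q2, q3, b0, b1, b2, b3, mul_inv]
          have hS : (1:ℂ) * (((l:ℂ)-1) * (1/2))
              + ((1/2) * (ω^(j:ℕ)*ζ)^(l-1)) * (((l:ℂ)-1) * (-μ⁻¹ * ζ ^ (-((l:ℤ)-1))))
              + ((ω^(j:ℕ)*ζ)^(l-1)) * (((l:ℂ)-1) * ((2:ℂ)⁻¹ * μ⁻¹ * ζ ^ (-((l:ℤ)-1))))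
              + ((1/2) * (ω^(j:ℕ)*ζ)^(2*l-2)) * (((l:ℂ)-1) * (-(ζ ^ (-(2*(l:ℤ)-2))))) = 0 := by
            linear_combination (-(((l:ℂ)-1))/2) * hgBD
          rw [hS, mul_zero]
        · by_cases hj2 : (j:ℕ) = 2*l-2
          · have hjk : j = k := Fin.ext (by omega)
            rw [if_pos hjk]
            have q0 : QmatD l ω μ ζ j ⟨0, by omega⟩ = 1 := by
              simp only [QmatD, Matrix.of_apply, Fin.val_mk]
              rw [if_neg hj, if_pos hj2, if_pos (by trivial)]
            have q1 : QmatD l ω μ ζ j ⟨l-1, by omega⟩ = -(μ/2) * ζ^(l-1) := by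
              simp only [QmatD, Matrix.of_apply, Fin.val_mk]
              rw [if_neg hj, if_pos hj2, if_neg (by omega), if_pos (by omega)]
            have q2 : QmatD l ω μ ζ j ⟨l, by omega⟩ = μ * ζ^(l-1) := by
              simp only [QmatD, Matrix.of_apply, Fin.val_mk]
              rw [if_neg hj, if_pos hj2, if_neg (by omega), if_neg (by omega), if_pos (by trivial)]
            have q3 : QmatD l ω μ ζ j ⟨2*l-1, by omega⟩ = -(1/2) * ζ^(2*l-2) := by
              simp only [QmatD, Matrix.of_apply, Fin.val_mk]
              rw [if_neg hj, if_pos hj2, if_neg (by omega), if_neg (by omega),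
                if_neg (by omega), if_pos (by omega)]
            rw [q0, q1, q2, q3, b0, b1, b2, b3, mul_inv]
            have hS : (1:ℂ) * (((l:ℂ)-1) * (1/2))
                + (-(μ/2) * ζ^(l-1)) * (((l:ℂ)-1) * (-μ⁻¹ * ζ ^ (-((l:ℤ)-1))))
                + (μ * ζ^(l-1)) * (((l:ℂ)-1) * ((2:ℂ)⁻¹ * μ⁻¹ * ζ ^ (-((l:ℤ)-1))))
                + (-(1/2) * ζ^(2*l-2)) * (((l:ℂ)-1) * (-(ζ ^ (-(2*(l:ℤ)-2)))))
                = 2*(l:ℂ)-2 := by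
              linear_combination (((l:ℂ)-1) * μ * μ⁻¹) * hAC + ((l:ℂ)-1) * hmu
                + (((l:ℂ)-1)/2) * hBD0
            rw [hS, one_div, inv_mul_cancel₀ hN0]
          · have hjk : ¬ j = k := Fin.ne_of_val_ne (by omega)
            rw [if_neg hjk]
            have q0 : QmatD l ω μ ζ j ⟨0, by omega⟩ = 1 := by
              simp only [QmatD, Matrix.of_apply, Fin.val_mk]
              rw [if_neg hj, if_neg hj2, if_pos (by trivial)]
            have q1 : QmatD l ω μ ζ j ⟨l-1, by omega⟩ = (μ/2) * ζ^(l-1) := by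
              simp only [QmatD, Matrix.of_apply, Fin.val_mk]
              rw [if_neg hj, if_neg hj2, if_neg (by omega), if_pos (by omega)]
            have q2 : QmatD l ω μ ζ j ⟨l, by omega⟩ = -μ * ζ^(l-1) := by
              simp only [QmatD, Matrix.of_apply, Fin.val_mk]
              rw [if_neg hj, if_neg hj2, if_neg (by omega), if_neg (by omega), if_pos (by trivial)]
            have q3 : QmatD l ω μ ζ j ⟨2*l-1, by omega⟩ = -(1/2) * ζ^(2*l-2) := by
              simp only [QmatD, Matrix.of_apply, Fin.val_mk]
              rw [if_neg hj, if_neg hj2, if_neg (by omega), if_neg (by omega),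
                if_neg (by omega), if_pos (by omega)]
            rw [q0, q1, q2, q3, b0, b1, b2, b3, mul_inv]
            have hS : (1:ℂ) * (((l:ℂ)-1) * (1/2))
                + ((μ/2) * ζ^(l-1)) * (((l:ℂ)-1) * (-μ⁻¹ * ζ ^ (-((l:ℤ)-1))))
                + (-μ * ζ^(l-1)) * (((l:ℂ)-1) * ((2:ℂ)⁻¹ * μ⁻¹ * ζ ^ (-((l:ℤ)-1))))
                + (-(1/2) * ζ^(2*l-2)) * (((l:ℂ)-1) * (-(ζ ^ (-(2*(l:ℤ)-2))))) = 0 := by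
              linear_combination (-((l:ℂ)-1) * μ * μ⁻¹) * hAC + (-((l:ℂ)-1)) * hmu
                + (((l:ℂ)-1)/2) * hBD0
            rw [hS, mul_zero]
      · -- k = 2l-1 column (betaD0')
        have hP : ∀ i : Fin (2*l), PmatD l ω μ ζ i k
            = (1 / (2*(l:ℂ)-2)) * betaD0' l μ ζ i := by
          intro i; simp only [PmatD, Matrix.of_apply]; rw [if_neg hk, if_neg hk2]
        simp only [hP]
        rw [pull]
        have hFz : ∀ i : Fin (2*l), (i:ℕ) ≠ 0 → (i:ℕ) ≠ l-1 → (i:ℕ) ≠ l → (i:ℕ) ≠ 2*l-1 →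
            QmatD l ω μ ζ j i * betaD0' l μ ζ i = 0 := by
          intro i n0 n1 n2 n3
          simp only [betaD0']
          rw [if_neg n0, if_neg (by omega), if_neg n2, if_neg (by omega), mul_zero, mul_zero]
        rw [foursum hl _ hFz]
        have b0 : betaD0' l μ ζ ⟨0, by omega⟩ = ((l:ℂ)-1) * (1/2) := by
          simp only [betaD0', Fin.val_mk]; rw [if_pos (by trivial)]
        have b1 : betaD0' l μ ζ ⟨l-1, by omega⟩ = ((l:ℂ)-1) * (μ⁻¹ * ζ ^ (-((l:ℤ)-1))) := by
          simp only [betaD0', Fin.val_mk]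
          rw [if_neg (by omega), if_pos (by omega)]
        have b2 : betaD0' l μ ζ ⟨l, by omega⟩
            = ((l:ℂ)-1) * (-((2*μ)⁻¹ * ζ ^ (-((l:ℤ)-1)))) := by
          simp only [betaD0', Fin.val_mk]
          rw [if_neg (by omega), if_neg (by omega), if_pos (by trivial)]
        have b3 : betaD0' l μ ζ ⟨2*l-1, by omega⟩ = ((l:ℂ)-1) * (-(ζ ^ (-(2*(l:ℤ)-2)))) := by
          simp only [betaD0', Fin.val_mk]
          rw [if_neg (by omega), if_neg (by omega), if_neg (by omega), if_pos (by omega)]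
        by_cases hj : (j:ℕ) < 2*l-2
        · have hjk : ¬ j = k := Fin.ne_of_val_ne (by omega)
          rw [if_neg hjk]
          have hgBD : (ω^(j:ℕ)*ζ)^(2*l-2) * ζ ^ (-(2*(l:ℤ)-2)) = 1 := by
            rw [hgN]; exact hBD0
          have q0 : QmatD l ω μ ζ j ⟨0, by omega⟩ = 1 := by
            simp only [QmatD, Matrix.of_apply, Fin.val_mk]
            rw [if_pos hj, if_pos (by trivial)]
          have q1 : QmatD l ω μ ζ j ⟨l-1, by omega⟩ = (1/2) * (ω^(j:ℕ)*ζ)^(l-1) := by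
            simp only [QmatD, Matrix.of_apply, Fin.val_mk]
            rw [if_pos hj, if_neg (by omega), if_neg (by omega), if_pos (by omega)]
          have q2 : QmatD l ω μ ζ j ⟨l, by omega⟩ = (ω^(j:ℕ)*ζ)^(l-1) := by
            simp only [QmatD, Matrix.of_apply, Fin.val_mk]
            rw [if_pos hj, if_neg (by omega), if_neg (by omega), if_neg (by omega),
              if_pos (by trivial)]
          have q3 : QmatD l ω μ ζ j ⟨2*l-1, by omega⟩ = (1/2) * (ω^(j:ℕ)*ζ)^(2*l-2) := by
            simp only [QmatD, Matrix.of_apply, Fin.val_mk]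
            rw [if_pos hj, if_neg (by omega), if_neg (by omega), if_neg (by omega),
              if_neg (by omega), if_pos (by omega)]
          rw [q0, q1, q2, q3, b0, b1, b2, b3, mul_inv]
          have hS : (1:ℂ) * (((l:ℂ)-1) * (1/2))
              + ((1/2) * (ω^(j:ℕ)*ζ)^(l-1)) * (((l:ℂ)-1) * (μ⁻¹ * ζ ^ (-((l:ℤ)-1))))
              + ((ω^(j:ℕ)*ζ)^(l-1)) * (((l:ℂ)-1) * (-((2:ℂ)⁻¹ * μ⁻¹ * ζ ^ (-((l:ℤ)-1)))))
              + ((1/2) * (ω^(j:ℕ)*ζ)^(2*l-2)) * (((l:ℂ)-1) * (-(ζ ^ (-(2*(l:ℤ)-2))))) = 0 := by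
            linear_combination (-(((l:ℂ)-1))/2) * hgBD
          rw [hS, mul_zero]
        · by_cases hj2 : (j:ℕ) = 2*l-2
          · have hjk : ¬ j = k := Fin.ne_of_val_ne (by omega)
            rw [if_neg hjk]
            have q0 : QmatD l ω μ ζ j ⟨0, by omega⟩ = 1 := by
              simp only [QmatD, Matrix.of_apply, Fin.val_mk]
              rw [if_neg hj, if_pos hj2, if_pos (by trivial)]
            have q1 : QmatD l ω μ ζ j ⟨l-1, by omega⟩ = -(μ/2) * ζ^(l-1) := by
              simp only [QmatD, Matrix.of_apply, Fin.val_mk]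
              rw [if_neg hj, if_pos hj2, if_neg (by omega), if_pos (by omega)]
            have q2 : QmatD l ω μ ζ j ⟨l, by omega⟩ = μ * ζ^(l-1) := by
              simp only [QmatD, Matrix.of_apply, Fin.val_mk]
              rw [if_neg hj, if_pos hj2, if_neg (by omega), if_neg (by omega), if_pos (by trivial)]
            have q3 : QmatD l ω μ ζ j ⟨2*l-1, by omega⟩ = -(1/2) * ζ^(2*l-2) := by
              simp only [QmatD, Matrix.of_apply, Fin.val_mk]
              rw [if_neg hj, if_pos hj2, if_neg (by omega), if_neg (by omega),
                if_neg (by omega), if_pos (by omega)]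
            rw [q0, q1, q2, q3, b0, b1, b2, b3, mul_inv]
            have hS : (1:ℂ) * (((l:ℂ)-1) * (1/2))
                + (-(μ/2) * ζ^(l-1)) * (((l:ℂ)-1) * (μ⁻¹ * ζ ^ (-((l:ℤ)-1))))
                + (μ * ζ^(l-1)) * (((l:ℂ)-1) * (-((2:ℂ)⁻¹ * μ⁻¹ * ζ ^ (-((l:ℤ)-1)))))
                + (-(1/2) * ζ^(2*l-2)) * (((l:ℂ)-1) * (-(ζ ^ (-(2*(l:ℤ)-2))))) = 0 := by
              linear_combination (-((l:ℂ)-1) * μ * μ⁻¹) * hAC + (-((l:ℂ)-1)) * hmu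
                + (((l:ℂ)-1)/2) * hBD0
            rw [hS, mul_zero]
          · have hjk : j = k := Fin.ext (by omega)
            rw [if_pos hjk]
            have q0 : QmatD l ω μ ζ j ⟨0, by omega⟩ = 1 := by
              simp only [QmatD, Matrix.of_apply, Fin.val_mk]
              rw [if_neg hj, if_neg hj2, if_pos (by trivial)]
            have q1 : QmatD l ω μ ζ j ⟨l-1, by omega⟩ = (μ/2) * ζ^(l-1) := by
              simp only [QmatD, Matrix.of_apply, Fin.val_mk]
              rw [if_neg hj, if_neg hj2, if_neg (by omega), if_pos (by omega)]
            have q2 : QmatD l ω μ ζ j ⟨l, by omega⟩ = -μ * ζ^(l-1) := by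
              simp only [QmatD, Matrix.of_apply, Fin.val_mk]
              rw [if_neg hj, if_neg hj2, if_neg (by omega), if_neg (by omega), if_pos (by trivial)]
            have q3 : QmatD l ω μ ζ j ⟨2*l-1, by omega⟩ = -(1/2) * ζ^(2*l-2) := by
              simp only [QmatD, Matrix.of_apply, Fin.val_mk]
              rw [if_neg hj, if_neg hj2, if_neg (by omega), if_neg (by omega),
                if_neg (by omega), if_pos (by omega)]
            rw [q0, q1, q2, q3, b0, b1, b2, b3, mul_inv]
            have hS : (1:ℂ) * (((l:ℂ)-1) * (1/2))
                + ((μ/2) * ζ^(l-1)) * (((l:ℂ)-1) * (μ⁻¹ * ζ ^ (-((l:ℤ)-1))))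
                + (-μ * ζ^(l-1)) * (((l:ℂ)-1) * (-((2:ℂ)⁻¹ * μ⁻¹ * ζ ^ (-((l:ℤ)-1)))))
                + (-(1/2) * ζ^(2*l-2)) * (((l:ℂ)-1) * (-(ζ ^ (-(2*(l:ℤ)-2)))))
                = 2*(l:ℂ)-2 := by
              linear_combination (((l:ℂ)-1) * μ * μ⁻¹) * hAC + ((l:ℂ)-1) * hmu
                + (((l:ℂ)-1)/2) * hBD0
            rw [hS, one_div, inv_mul_cancel₀ hN0]
  exact ⟨(Matrix.isUnit_iff_isUnit_det _).mpr (Matrix.isUnit_det_of_left_inverse hQP), hmain⟩
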